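/- If f : B² → B² is a K-quasiconformal homeomorphism of the unit disk onto itself with K ≥ 1, then for all x, y ∈ B², |f(x) − f(y)| ≤ 2^{3−1/K} · ( s_{B²}(x,y)/(1 + s_{B²}(x,y)²) )^{1/K}. -/

import Mathlib

/-- Triangular ratio metric of the unit disk. -/
noncomputable def sB (x y : ℂ) : ℝ :=
  ‖x - y‖ /
    sInf ((fun z => ‖x - z‖ + ‖z - y‖) '' {z : ℂ | ‖z‖ = 1})

/-- The hyperbolic metric of the unit disk, characterized by
`sinh²(ρ(x,y)/2) = |x−y|²/((1−|x|²)(1−|y|²))`. -/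
noncomputable def rhoB (x y : ℂ) : ℝ :=
  2 * Real.arsinh (‖x - y‖ /
    Real.sqrt ((1 - ‖x‖ ^ 2) * (1 - ‖y‖ ^ 2)))

/-- `f` is a `K`-quasiconformal homeomorphism of the unit disk onto itself: we record the
properties of such maps used in the proof, namely that `f` maps the disk bijectively onto
itself and satisfies the quasiconformal Schwarz lemma
`tanh(ρ(f x, f y)/2) ≤ φ_K(tanh(ρ(x,y)/2)) ≤ 4^{1−1/K}·tanh(ρ(x,y)/2)^{1/K}`. -/
structure IsKQuasiconformalDiskMap (K : ℝ) (f : ℂ → ℂ) : Prop where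
  mapsTo : ∀ x : ℂ, ‖x‖ < 1 → ‖f x‖ < 1
  bijOn : Set.BijOn f {z : ℂ | ‖z‖ < 1} {z : ℂ | ‖z‖ < 1}
  continuousOn : ContinuousOn f {z : ℂ | ‖z‖ < 1}
  schwarz : ∀ x y : ℂ, ‖x‖ < 1 → ‖y‖ < 1 →
    Real.tanh (rhoB (f x) (f y) / 2) ≤
      (4 : ℝ) ^ (1 - 1 / K) * Real.tanh (rhoB x y / 2) ^ (1 / K : ℝ)

set_option maxHeartbeats 1000000

private lemma le_of_sq_le_sq' {w s : ℝ} (hA : 0 ≤ s) (h : w^2 ≤ s^2) : w ≤ s := by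
  rcases le_or_gt w 0 with h0 | h0
  · linarith
  · nlinarith

private lemma lemF (a b u : ℝ) (hb0 : 0 ≤ b) (hba : b ≤ a) (ha1 : a ≤ 1) (hu : 2 - b ≤ u) :
    0 ≤ 2*u^2 - 2*u*(1+a+b-a*b) + (a+b+a^2*(1-b)+b^2*(1-a)) := by
  nlinarith [mul_nonneg (sub_nonneg.2 hu) (sub_nonneg.2 hu), sq_nonneg (a-b), sq_nonneg (1-a), sq_nonneg (1-b), mul_nonneg (sub_nonneg.2 hba) (sub_nonneg.2 ha1), mul_nonneg (mul_nonneg hb0 (sub_nonneg.2 ha1)) (sub_nonneg.2 (le_trans hba ha1)), mul_nonneg (sub_nonneg.2 hu) (sub_nonneg.2 ha1), mul_nonneg (sub_nonneg.2 hu) hb0, mul_nonneg (sub_nonneg.2 hu) (sub_nonneg.2 hba)]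

private lemma lemStep1 (a b u : ℝ) (hb0 : 0 ≤ b) (hba : b ≤ a) (ha1 : a ≤ 1) (hu : 2 - b ≤ u) :
    (1-a)*(1+b)*(u-b)^2 ≤ (1+a)*(1-b)*(u-a)^2 := by
  have hF := lemF a b u hb0 hba ha1 hu
  nlinarith [mul_nonneg (sub_nonneg.2 hba) hF]

private lemma lemP2 (a b l : ℝ) (hb0 : 0 ≤ b) (hba : b ≤ a) (ha1 : a ≤ 1)
    (hl1 : 1 - b ≤ l) (hl2 : l ≤ 1 + b) :
    (1-a)^2*((l+1)^2-b^2)^2 ≤ 4*(1-a^2)*(1-b^2)*(l+1-a)^2 := by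
  have hb1 : b ≤ 1 := le_trans hba ha1
  have h1 := lemStep1 a b (l+1) hb0 hba ha1 (by linarith)
  have hX : 0 ≤ (1-a)*(l+1-b)^2 := mul_nonneg (by linarith) (sq_nonneg _)
  have h2 : (l+1+b)^2 ≤ (2+2*b)^2 := by nlinarith
  have h3 : (1-a)*((l+1)^2-b^2)^2 ≤ 4*(1+a)*(1-b^2)*(l+1-a)^2 := by
    nlinarith [mul_le_mul_of_nonneg_left h2 hX, mul_le_mul_of_nonneg_left h1 (by positivity : (0:ℝ) ≤ 4*(1+b))]
  nlinarith [mul_le_mul_of_nonneg_left h3 (by linarith : (0:ℝ) ≤ 1-a)]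

private lemma lemR1 (a b c s t l : ℝ) (hb0 : 0 ≤ b) (hba : b ≤ a) (ha1 : a ≤ 1)
    (hc : c^2 ≤ b^2) (hs0 : 0 ≤ s) (ht0 : 0 ≤ t) (hl0 : 0 ≤ l)
    (hs : s^2 = 1 + a^2*b^2 - 2*a*c) (ht : t^2 = (1-a^2)*(1-b^2)) (hl : l^2 = 1+b^2-2*c) :
    1 - a + l ≤ s + t := by
  have hb1 : b ≤ 1 := le_trans hba ha1
  have ha0 : 0 ≤ a := le_trans hb0 hba
  have hc1 : -b ≤ c := by nlinarith
  have hc2 : c ≤ b := by nlinarith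
  have hl1 : 1 - b ≤ l := by nlinarith
  have hl2 : l ≤ 1 + b := by nlinarith
  rcases le_or_gt l t with hlt | hlt
  · have h1 : s^2 = (1-a)^2 + a*l^2 + a*(1-a)*(1-b^2) := by
      linear_combination hs - a*hl
    have h2 : 1 - a ≤ s := le_of_sq_le_sq' hs0 (by nlinarith [mul_nonneg ha0 (sq_nonneg l), mul_nonneg (mul_nonneg ha0 (by linarith : (0:ℝ) ≤ 1-a)) (by nlinarith : (0:ℝ) ≤ 1-b^2)])
    linarith
  · have hW : 0 ≤ 1 - a + (l - t) := by linarith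
    have hkey : (1-a)*((l+1)^2-b^2) ≤ 2*t*(l+1-a) := by
      apply le_of_sq_le_sq' (mul_nonneg (mul_nonneg (by norm_num) ht0) (by linarith : (0:ℝ) ≤ l+1-a))
      have e : (2*t*(l+1-a))^2 = 4*(1-a^2)*(1-b^2)*(l+1-a)^2 := by
        linear_combination 4*(l+1-a)^2 * ht
      rw [e, show ((1-a)*((l+1)^2-b^2))^2 = (1-a)^2*((l+1)^2-b^2)^2 by ring]
      exact lemP2 a b l hb0 hba ha1 hl1 hl2
    have hW2 : s^2 - (1-a+(l-t))^2 = 2*t*(l+1-a) - (1-a)*((l+1)^2-b^2) := by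
      linear_combination hs - a*hl - ht
    have hsqW : (1-a+(l-t))^2 ≤ s^2 := by linarith
    have := le_of_sq_le_sq' hs0 hsqW
    linarith

private lemma lemL1R (x1 x2 y1 y2 z1 z2 : ℝ) (hx : x1^2+x2^2 ≤ 1) (hy : y1^2+y2^2 ≤ 1)
    (hz : z1^2+z2^2 = 1) :
    Real.sqrt ((x1-y1)^2+(x2-y2)^2 + (1-(x1^2+x2^2))*(1-(y1^2+y2^2))) ≤
      Real.sqrt ((x1-z1)^2+(x2-z2)^2) + Real.sqrt ((z1-y1)^2+(z2-y2)^2) := by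
  set N1 := (x1-z1)^2+(x2-z2)^2 with hN1
  set N2 := (z1-y1)^2+(z2-y2)^2 with hN2
  have hN10 : 0 ≤ N1 := by positivity
  have hN20 : 0 ≤ N2 := by positivity
  set pr := (z1-x1)*z1 + (z2-x2)*z2 with hpr
  set pi := (z2-x2)*z1 - (z1-x1)*z2 with hpi
  set qr := (z1-y1)*z1 + (z2-y2)*z2 with hqr
  set qi := (z2-y2)*z1 - (z1-y1)*z2 with hqi
  have hNp : pr^2 + pi^2 = N1 := by rw [hpr, hpi, hN1]; linear_combination ((x1-z1)^2+(x2-z2)^2) * hz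
  have hNq : qr^2 + qi^2 = N2 := by rw [hqr, hqi, hN2]; linear_combination ((z1-y1)^2+(z2-y2)^2) * hz
  have hK : pr*qr - pi*qi ≤ Real.sqrt N1 * Real.sqrt N2 := by
    rw [← Real.sqrt_mul hN10]
    rcases le_or_gt (pr*qr - pi*qi) 0 with h0 | h0
    · exact le_trans h0 (Real.sqrt_nonneg _)
    · have hsq : (pr*qr - pi*qi)^2 ≤ N1*N2 := by
        have : (pr*qr - pi*qi)^2 + (pr*qi + pi*qr)^2 = (pr^2+pi^2)*(qr^2+qi^2) := by ring
        nlinarith [sq_nonneg (pr*qi + pi*qr)]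
      exact (Real.le_sqrt h0.le (by positivity)).2 hsq
  have hA : 1-(x1^2+x2^2) = 2*pr - N1 := by rw [hpr, hN1]; linear_combination -hz
  have hB : 1-(y1^2+y2^2) = 2*qr - N2 := by rw [hqr, hN2]; linear_combination -hz
  have hA0 : 0 ≤ 2*pr - N1 := by rw [← hA]; linarith
  have hB0 : 0 ≤ 2*qr - N2 := by rw [← hB]; linarith
  have hpr0 : 0 ≤ pr := by nlinarith
  have hqr0 : 0 ≤ qr := by nlinarith
  have hAB : (2*pr-N1)*(2*qr-N2) ≤ 4*pr*qr := by nlinarith [mul_nonneg hN10 hB0, mul_nonneg hpr0 hN20]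
  have hE : (x1-y1)^2+(x2-y2)^2 + (1-(x1^2+x2^2))*(1-(y1^2+y2^2)) =
      N1 + N2 + 2*(pr*qr - pi*qi) + ((2*pr-N1)*(2*qr-N2) - 4*pr*qr) := by
    rw [hpr, hpi, hqr, hqi, hN1, hN2]
    linear_combination ((x1+y1-z1)^2+(x2+y2-z2)^2-1) * hz
  have hle : (x1-y1)^2+(x2-y2)^2 + (1-(x1^2+x2^2))*(1-(y1^2+y2^2)) ≤
      (Real.sqrt N1 + Real.sqrt N2)^2 := by
    have e : (Real.sqrt N1 + Real.sqrt N2)^2 = N1 + N2 + 2*(Real.sqrt N1 * Real.sqrt N2) := by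
      rw [add_sq, Real.sq_sqrt hN10, Real.sq_sqrt hN20]; ring
    rw [e, hE]; linarith
  calc Real.sqrt ((x1-y1)^2+(x2-y2)^2 + (1-(x1^2+x2^2))*(1-(y1^2+y2^2)))
      ≤ Real.sqrt ((Real.sqrt N1 + Real.sqrt N2)^2) := Real.sqrt_le_sqrt hle
    _ = Real.sqrt N1 + Real.sqrt N2 := Real.sqrt_sq (by positivity)

private lemma lemTanh (u v : ℂ) (hu : ‖u‖ < 1) (hv : ‖v‖ < 1) :
    Real.tanh (rhoB u v / 2) = ‖u-v‖ /
      Real.sqrt (‖u-v‖^2 + (1-‖u‖^2)*(1-‖v‖^2)) := by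
  have hu0 := norm_nonneg u
  have hv0 := norm_nonneg v
  have hC0 : 0 < (1-‖u‖^2)*(1-‖v‖^2) :=
    mul_pos (by nlinarith) (by nlinarith)
  set d := ‖u-v‖ with hd
  have hd0 : 0 ≤ d := norm_nonneg _
  set C := (1-‖u‖^2)*(1-‖v‖^2) with hC
  have hsC : 0 < Real.sqrt C := Real.sqrt_pos.2 hC0
  have h1 : rhoB u v / 2 = Real.arsinh (d / Real.sqrt C) := by
    rw [rhoB]; ring
  rw [h1, Real.tanh_eq_sinh_div_cosh, Real.sinh_arsinh, Real.cosh_arsinh]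
  have h2 : 1 + (d / Real.sqrt C)^2 = (d^2 + C)/C := by
    rw [div_pow, Real.sq_sqrt hC0.le]; field_simp; ring
  rw [h2, Real.sqrt_div (by positivity) C]
  have h3 : 0 < Real.sqrt (d^2 + C) := Real.sqrt_pos.2 (by positivity)
  field_simp

private lemma abs_sq_coord (w : ℂ) : ‖w‖ ^ 2 = w.re^2 + w.im^2 := by
  rw [Complex.sq_norm, Complex.normSq_apply]; ring

private lemma abs_coord (w : ℂ) : ‖w‖ = Real.sqrt (w.re^2 + w.im^2) := by
  rw [Complex.norm_def, Complex.normSq_apply]; ring_nf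

private lemma lemL1 (x y z : ℂ) (hx : ‖x‖ ≤ 1) (hy : ‖y‖ ≤ 1)
    (hz : ‖z‖ = 1) :
    Real.sqrt (‖x-y‖^2 + (1-‖x‖^2)*(1-‖y‖^2)) ≤
      ‖x-z‖ + ‖z-y‖ := by
  have hx2 : x.re^2 + x.im^2 ≤ 1 := by
    rw [← abs_sq_coord]; nlinarith [norm_nonneg x]
  have hy2 : y.re^2 + y.im^2 ≤ 1 := by
    rw [← abs_sq_coord]; nlinarith [norm_nonneg y]
  have hz2 : z.re^2 + z.im^2 = 1 := by rw [← abs_sq_coord, hz]; norm_num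
  have e1 : ‖x-y‖^2 = (x.re-y.re)^2 + (x.im-y.im)^2 := by
    rw [abs_sq_coord]; simp [Complex.sub_re, Complex.sub_im]
  have e2 : ‖x-z‖ = Real.sqrt ((x.re-z.re)^2 + (x.im-z.im)^2) := by
    rw [abs_coord]; simp [Complex.sub_re, Complex.sub_im]
  have e3 : ‖z-y‖ = Real.sqrt ((z.re-y.re)^2 + (z.im-y.im)^2) := by
    rw [abs_coord]; simp [Complex.sub_re, Complex.sub_im]
  rw [e1, e2, e3, abs_sq_coord x, abs_sq_coord y]
  exact lemL1R x.re x.im y.re y.im z.re z.im hx2 hy2 hz2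

private lemma lemUpper (x y : ℂ) (hx : ‖x‖ < 1) (hy : ‖y‖ < 1)
    (hba : ‖y‖ ≤ ‖x‖) :
    sInf ((fun z => ‖x-z‖ + ‖z-y‖) '' {z : ℂ | ‖z‖ = 1}) ≤
      Real.sqrt (‖x-y‖^2 + (1-‖x‖^2)*(1-‖y‖^2)) +
        Real.sqrt ((1-‖x‖^2)*(1-‖y‖^2)) := by
  have hbdd : BddBelow ((fun z => ‖x-z‖ + ‖z-y‖) '' {z : ℂ | ‖z‖ = 1}) := by
    refine ⟨0, fun w hw => ?_⟩
    obtain ⟨z, _, rfl⟩ := hw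
    positivity
  by_cases hx0 : x = 0
  · have hy0 : y = 0 := by
      have h : ‖y‖ ≤ 0 := by simpa [hx0] using hba
      exact norm_eq_zero.1 (le_antisymm h (norm_nonneg y))
    subst hx0; subst hy0
    have hmem : (2:ℝ) ∈ ((fun z => ‖(0:ℂ)-z‖ + ‖z-(0:ℂ)‖) '' {z : ℂ | ‖z‖ = 1}) := by
      refine ⟨1, by simp, by norm_num⟩
    refine le_trans (csInf_le hbdd hmem) ?_
    norm_num
  · set a := ‖x‖ with haDef
    set b := ‖y‖ with hbDef
    have ha0 : 0 ≤ a := norm_nonneg x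
    have hb0 : 0 ≤ b := norm_nonneg y
    have hapos : 0 < a := by
      rcases eq_or_lt_of_le ha0 with h | h
      · exact absurd (norm_eq_zero.1 h.symm) hx0
      · exact h
    have hane : a ≠ 0 := ne_of_gt hapos
    set z₀ : ℂ := (↑(a⁻¹) : ℂ) * x with hz₀
    have hz₀abs : ‖z₀‖ = 1 := by
      rw [hz₀, norm_mul, Complex.norm_real, Real.norm_eq_abs, abs_of_pos (by positivity), ← haDef]
      field_simp
    have hmem : ‖x - z₀‖ + ‖z₀ - y‖ ∈
        ((fun z => ‖x-z‖ + ‖z-y‖) '' {z : ℂ | ‖z‖ = 1}) :=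
      ⟨z₀, hz₀abs, rfl⟩
    refine le_trans (csInf_le hbdd hmem) ?_
    have hxz : ‖x - z₀‖ = 1 - a := by
      have e : x - z₀ = (↑(1 - a⁻¹) : ℂ) * x := by rw [hz₀]; push_cast; ring
      have hainv : 1 ≤ a⁻¹ := by
        rw [le_inv_comm₀ one_pos hapos]
        simpa using hx.le
      rw [e, norm_mul, Complex.norm_real, Real.norm_eq_abs, ← haDef, abs_of_nonpos (by linarith)]
      field_simp
      ring
    -- coordinates
    have ha2 : a^2 = x.re^2 + x.im^2 := by rw [haDef, abs_sq_coord]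
    have hb2 : b^2 = y.re^2 + y.im^2 := by rw [hbDef, abs_sq_coord]
    set c : ℝ := a⁻¹ * (x.re*y.re + x.im*y.im) with hcDef
    have hac : a * c = x.re*y.re + x.im*y.im := by rw [hcDef]; field_simp
    have hz₀re : z₀.re = a⁻¹ * x.re := by rw [hz₀]; simp [Complex.mul_re]
    have hz₀im : z₀.im = a⁻¹ * x.im := by rw [hz₀]; simp [Complex.mul_im]
    set l := ‖z₀ - y‖ with hlDef
    have hl0 : 0 ≤ l := norm_nonneg _
    have hl : l^2 = 1 + b^2 - 2*c := by
      rw [hlDef, abs_sq_coord, Complex.sub_re, Complex.sub_im, hz₀re, hz₀im, hb2, hcDef]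
      field_simp
      linear_combination -ha2
    set S := Real.sqrt (‖x-y‖^2 + (1-a^2)*(1-b^2)) with hSDef
    set T := Real.sqrt ((1-a^2)*(1-b^2)) with hTDef
    have hCnn : 0 ≤ (1-a^2)*(1-b^2) := mul_nonneg (by nlinarith) (by nlinarith)
    have hS2 : S^2 = 1 + a^2*b^2 - 2*a*c := by
      rw [hSDef, Real.sq_sqrt (by positivity), abs_sq_coord, Complex.sub_re, Complex.sub_im]
      linear_combination -ha2 - hb2 + 2*hac
    have hT2 : T^2 = (1-a^2)*(1-b^2) := Real.sq_sqrt hCnn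
    have hc2b : c^2 ≤ b^2 := by
      have hcs : (x.re*y.re + x.im*y.im)^2 ≤ a^2*b^2 := by
        rw [ha2, hb2]; nlinarith [sq_nonneg (x.re*y.im - x.im*y.re)]
      have e : a^2 * c^2 = (x.re*y.re + x.im*y.im)^2 := by rw [hcDef]; field_simp
      have h' : a^2*c^2 ≤ a^2*b^2 := by rw [e]; exact hcs
      exact le_of_mul_le_mul_left h' (by positivity)
    have := lemR1 a b c S T l hb0 hba hx.le hc2b (Real.sqrt_nonneg _) (Real.sqrt_nonneg _) hl0 hS2 hT2 hl
    rw [hxz]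
    linarith

theorem stmt_19 (K : ℝ) (hK : 1 ≤ K) (f : ℂ → ℂ) (hf : IsKQuasiconformalDiskMap K f)
    (x y : ℂ) (hx : ‖x‖ < 1) (hy : ‖y‖ < 1) :
    ‖f x - f y‖ ≤
      (2 : ℝ) ^ (3 - 1 / K) * (sB x y / (1 + sB x y ^ 2)) ^ (1 / K : ℝ) := by
  have hfx : ‖f x‖ < 1 := hf.mapsTo x hx
  have hfy : ‖f y‖ < 1 := hf.mapsTo y hy
  have hK0 : (0:ℝ) < K := lt_of_lt_of_le one_pos hK
  have hKinv0 : (0:ℝ) ≤ 1/K := by positivity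
  have hd'0 : 0 ≤ ‖f x - f y‖ := norm_nonneg _
  -- image-side bound : |f x - f y| ≤ 2 tanh(ρ(f x, f y)/2)
  have hlow : ‖f x - f y‖ ≤ 2 * Real.tanh (rhoB (f x) (f y) / 2) := by
    rw [lemTanh (f x) (f y) hfx hfy]
    set au := ‖f x‖ with hau
    set av := ‖f y‖ with hav
    have hau0 : 0 ≤ au := norm_nonneg _
    have hav0 : 0 ≤ av := norm_nonneg _
    set d := ‖f x - f y‖ with hd
    set C := (1-au^2)*(1-av^2) with hC
    have hC0 : 0 < C := mul_pos (by nlinarith) (by nlinarith)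
    have hS0 : 0 < Real.sqrt (d^2+C) := Real.sqrt_pos.2 (by positivity)
    have hdle : d ≤ au + av := by
      have := norm_add_le (f x) (-(f y))
      rw [hd, hau, hav]; simpa [sub_eq_add_neg] using this
    have hprod : au*av < 1 := by nlinarith
    have hle4 : d^2 + C ≤ 2^2 := by
      nlinarith [mul_self_le_mul_self hd'0 hdle, mul_nonneg hau0 hav0]
    have hsle : Real.sqrt (d^2+C) ≤ 2 := by
      rw [show (2:ℝ) = Real.sqrt (2^2) from (Real.sqrt_sq (by norm_num)).symm]
      exact Real.sqrt_le_sqrt hle4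
    rw [mul_div_assoc']
    rw [le_div_iff₀ hS0]
    nlinarith [mul_le_mul_of_nonneg_left hsle hd'0]
  -- domain-side bound : tanh(ρ(x,y)/2) ≤ 2 s/(1+s²)
  have hhigh : Real.tanh (rhoB x y / 2) ≤ 2 * (sB x y / (1 + sB x y ^ 2)) := by
    rw [lemTanh x y hx hy]
    set d := ‖x-y‖ with hd
    set C := (1-‖x‖^2)*(1-‖y‖^2) with hC
    set I := sInf ((fun z => ‖x-z‖ + ‖z-y‖) '' {z : ℂ | ‖z‖ = 1}) with hI
    have hsB : sB x y = d / I := by unfold sB; rw [hd, hI]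
    have hC0 : 0 < C :=
      mul_pos (by nlinarith [norm_nonneg x]) (by nlinarith [norm_nonneg y])
    have hd0 : 0 ≤ d := norm_nonneg _
    have hS0 : 0 < Real.sqrt (d^2+C) := Real.sqrt_pos.2 (by positivity)
    have hne : ((fun z => ‖x-z‖ + ‖z-y‖) '' {z : ℂ | ‖z‖ = 1}).Nonempty :=
      ⟨_, Set.mem_image_of_mem _ (by simp : (1:ℂ) ∈ {z : ℂ | ‖z‖ = 1})⟩
    have hSI : Real.sqrt (d^2+C) ≤ I := by
      rw [hI]
      refine le_csInf hne ?_
      rintro w ⟨z, hzm, rfl⟩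
      exact lemL1 x y z hx.le hy.le hzm
    have hIu : I ≤ Real.sqrt (d^2+C) + Real.sqrt C := by
      rcases le_total (‖y‖) (‖x‖) with h | h
      · exact lemUpper x y hx hy h
      · have h2 := lemUpper y x hy hx h
        have hfeq : (fun z => ‖y-z‖ + ‖z-x‖) =
            (fun z => ‖x-z‖ + ‖z-y‖) := by
          funext z
          rw [norm_sub_rev y z, norm_sub_rev z x]
          ring
        rw [hfeq, norm_sub_rev y x,
          mul_comm (1-‖y‖^2) (1-‖x‖^2)] at h2
        exact h2
    have hIpos : 0 < I := lt_of_lt_of_le hS0 hSI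
    have hS2 : (Real.sqrt (d^2+C))^2 = d^2 + C := Real.sq_sqrt (by positivity)
    have hsqC : (I - Real.sqrt (d^2+C))^2 ≤ C := by
      nlinarith [Real.sq_sqrt hC0.le, Real.sqrt_nonneg C]
    have h2SI : I^2 + d^2 ≤ 2 * Real.sqrt (d^2+C) * I := by nlinarith
    rw [hsB]
    have e : (d/I) / (1 + (d/I)^2) = d*I/(I^2+d^2) := by
      field_simp
    rw [e, ← mul_div_assoc, div_le_div_iff₀ hS0 (by positivity)]
    nlinarith [mul_le_mul_of_nonneg_left h2SI hd0]
  -- nonnegativity facts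
  have ht0 : 0 ≤ Real.tanh (rhoB x y / 2) := by
    have h1 : 0 ≤ rhoB x y := by
      rw [rhoB]
      have := Real.arsinh_nonneg_iff.2 (by positivity :
        0 ≤ ‖x - y‖ / Real.sqrt ((1 - ‖x‖ ^ 2) * (1 - ‖y‖ ^ 2)))
      linarith
    rw [Real.tanh_eq_sinh_div_cosh]
    exact div_nonneg (by simpa using Real.sinh_nonneg_iff.2 (by linarith : (0:ℝ) ≤ rhoB x y / 2))
      (Real.cosh_pos _).le
  have hs0 : 0 ≤ sB x y := by
    unfold sB
    refine div_nonneg (norm_nonneg _) (Real.sInf_nonneg ?_)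
    rintro w ⟨z, _, rfl⟩
    positivity
  have hu0 : 0 ≤ sB x y / (1 + sB x y ^ 2) := div_nonneg hs0 (by positivity)
  -- assembling
  have hschwarz := hf.schwarz x y hx hy
  have hmono := Real.rpow_le_rpow ht0 hhigh hKinv0
  have h4nn : (0:ℝ) ≤ (4:ℝ)^(1-1/K) := Real.rpow_nonneg (by norm_num) _
  have step2 : ‖f x - f y‖ ≤
      2 * ((4:ℝ)^(1-1/K) * (2 * (sB x y / (1 + sB x y ^ 2)))^(1/K:ℝ)) := by
    calc ‖f x - f y‖ ≤ 2 * Real.tanh (rhoB (f x) (f y) / 2) := hlow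
      _ ≤ 2 * ((4:ℝ)^(1-1/K) * Real.tanh (rhoB x y / 2)^(1/K:ℝ)) := by
          exact mul_le_mul_of_nonneg_left hschwarz (by norm_num)
      _ ≤ 2 * ((4:ℝ)^(1-1/K) * (2 * (sB x y / (1 + sB x y ^ 2)))^(1/K:ℝ)) := by
          exact mul_le_mul_of_nonneg_left (mul_le_mul_of_nonneg_left hmono h4nn) (by norm_num)
  have h42 : (4:ℝ) = (2:ℝ)^(2:ℝ) := by
    have h' : (2:ℝ)^(2:ℝ) = (2:ℝ)^(2:ℕ) := by
      rw [← Real.rpow_natCast 2 2]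
      norm_num
    rw [h']
    norm_num
  have h4eq : (4:ℝ)^(1-1/K) = (2:ℝ)^(2-2/K) := by
    rw [h42, ← Real.rpow_mul (by norm_num : (0:ℝ) ≤ 2)]
    congr 1
    ring
  have hconst : (2:ℝ) * ((2:ℝ)^(2-2/K) * (2:ℝ)^(1/K:ℝ)) = (2:ℝ)^(3-1/K) := by
    rw [← Real.rpow_add (by norm_num : (0:ℝ) < 2)]
    nth_rewrite 1 [show (2:ℝ) = (2:ℝ)^(1:ℝ) from (Real.rpow_one 2).symm]
    rw [← Real.rpow_add (by norm_num : (0:ℝ) < 2)]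
    congr 1
    ring
  calc ‖f x - f y‖
      ≤ 2 * ((4:ℝ)^(1-1/K) * (2 * (sB x y / (1 + sB x y ^ 2)))^(1/K:ℝ)) := step2
    _ = 2 * ((2:ℝ)^(2-2/K) * ((2:ℝ)^(1/K:ℝ) * (sB x y / (1 + sB x y ^ 2))^(1/K:ℝ))) := by
        rw [h4eq, Real.mul_rpow (by norm_num) hu0]
    _ = (2 * ((2:ℝ)^(2-2/K) * (2:ℝ)^(1/K:ℝ))) * (sB x y / (1 + sB x y ^ 2))^(1/K:ℝ) := by
        ring
    _ = (2:ℝ)^(3-1/K) * (sB x y / (1 + sB x y ^ 2))^(1/K:ℝ) := by rw [hconst]
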